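/- Let q be a coefficient family that is symmetric, i.e. q_k(i,j) = q_k(j,i) for all k,i,j. Then for all integers k and i with 0 ≤ k ≤ r − 2m and 0 ≤ i ≤ r, setting j = 2m + k − i (assumed to satisfy 0 ≤ j ≤ r), one has q_k(i,j) = q_{n−k}(r−i, r−j). -/
import Mathlib


open Finset

noncomputable section

/-- `famN r m = 2r - 4m`, the highest weight `n` of the target representation. -/
def famN (r m : ℕ) : ℤ := 2 * (r : ℤ) - 4 * (m : ℤ)

/-- A *coefficient family* for parameters `r, m`: a function `q k i j` (complex valued,
indices integers) that vanishes whenever `(k,i,j)` is out of range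
(`0 ≤ k ≤ n`, `0 ≤ i,j ≤ r`, where `n = 2r - 4m`) and satisfies the sl₂-compatibility
relations (R1), (R2), (R3) for all admissible indices. -/
def IsCoeffFamily (r m : ℕ) (q : ℤ → ℤ → ℤ → ℂ) : Prop :=
  (∀ k i j : ℤ,
      ¬(0 ≤ k ∧ k ≤ famN r m ∧ 0 ≤ i ∧ i ≤ (r : ℤ) ∧ 0 ≤ j ∧ j ≤ (r : ℤ)) →
      q k i j = 0) ∧
  (∀ k i j : ℤ, 0 ≤ k → k ≤ famN r m → 0 ≤ i → i ≤ (r : ℤ) → 0 ≤ j → j ≤ (r : ℤ) →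
      (k : ℂ) * q (k - 1) i j
        = ((i : ℂ) + 1) * q k (i + 1) j + ((j : ℂ) + 1) * q k i (j + 1)) ∧
  (∀ k i j : ℤ, 0 ≤ k → k ≤ famN r m → 0 ≤ i → i ≤ (r : ℤ) → 0 ≤ j → j ≤ (r : ℤ) →
      ((famN r m - k : ℤ) : ℂ) * q (k + 1) i j
        = (((r : ℤ) - i + 1 : ℤ) : ℂ) * q k (i - 1) j
          + (((r : ℤ) - j + 1 : ℤ) : ℂ) * q k i (j - 1)) ∧
  (∀ k i j : ℤ, 0 ≤ k → k ≤ famN r m → 0 ≤ i → i ≤ (r : ℤ) → 0 ≤ j → j ≤ (r : ℤ) →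
      ((famN r m - 2 * k - 2 * (r : ℤ) + 2 * i + 2 * j : ℤ) : ℂ) * q k i j = 0)

/-- Binomial coefficient `binom a b` for integers, interpreted as `0` when `b` is out of
the range `0 ≤ b ≤ a`, as a complex number. -/
def binomZ (a b : ℤ) : ℂ :=
  if 0 ≤ b ∧ b ≤ a then (Nat.choose a.toNat b.toNat : ℂ) else 0

/-- The *canonical coefficient family* with parameter `λ`: the coefficient family whose
level-0 component is `q₀ i j = (-1)^i * binom (2m) i * λ` if `i + j = 2m` and `0`
otherwise. -/
def IsCanonical (r m : ℕ) (lam : ℂ) (q : ℤ → ℤ → ℤ → ℂ) : Prop :=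
  IsCoeffFamily r m q ∧
  ∀ i j : ℤ, 0 ≤ i → i ≤ (r : ℤ) → 0 ≤ j → j ≤ (r : ℤ) →
    q 0 i j =
      if i + j = 2 * (m : ℤ) then (-1) ^ i.toNat * binomZ (2 * (m : ℤ)) i * lam else 0
/-- the symmetry relation `q_k(i,j) = q_{n-k}(r-i, r-j)` for a symmetric
coefficient family, where `j = 2m + k - i` and `0 ≤ k ≤ r - 2m`. -/
theorem stmt4 (r m : ℕ) (hr : 2 ≤ r) (hm : 2 * m ≤ r)
    (q : ℤ → ℤ → ℤ → ℂ) (hq : IsCoeffFamily r m q)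
    (hsym : ∀ k i j : ℤ, q k i j = q k j i) :
    ∀ k i : ℤ, 0 ≤ k → k ≤ (r : ℤ) - 2 * (m : ℤ) → 0 ≤ i → i ≤ (r : ℤ) →
      0 ≤ 2 * (m : ℤ) + k - i → 2 * (m : ℤ) + k - i ≤ (r : ℤ) →
      q k i (2 * (m : ℤ) + k - i)
        = q (famN r m - k) ((r : ℤ) - i) ((r : ℤ) - (2 * (m : ℤ) + k - i)) := by
  obtain ⟨hz, hR1, hR2, hR3⟩ := hq
  have hfam : famN r m = 2 * ((r : ℤ) - 2 * (m : ℤ)) := by simp [famN]; ring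
  have key : ∀ t : ℕ, ∀ k i : ℤ, k + (t : ℤ) = (r : ℤ) - 2 * (m : ℤ) → 0 ≤ k →
      0 ≤ i → i ≤ (r : ℤ) → 0 ≤ 2 * (m : ℤ) + k - i → 2 * (m : ℤ) + k - i ≤ (r : ℤ) →
      q k i (2 * (m : ℤ) + k - i)
        = q (famN r m - k) ((r : ℤ) - i) ((r : ℤ) - (2 * (m : ℤ) + k - i)) := by
    intro t
    induction t with
    | zero =>
      intro k i hk hk0 hi0 hir hj0 hjr
      have hk' : k = (r : ℤ) - 2 * (m : ℤ) := by push_cast at hk; omega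
      have e3 : famN r m - k = k := by rw [hfam]; omega
      have e2 : (r : ℤ) - (2 * (m : ℤ) + k - i) = i := by omega
      have e1 : 2 * (m : ℤ) + k - i = (r : ℤ) - i := by omega
      rw [e3, e2, e1]
      exact hsym k i ((r : ℤ) - i)
    | succ t ih =>
      intro k i hk hk0 hi0 hir hj0 hjr
      have hk1 : (k + 1) + (t : ℤ) = (r : ℤ) - 2 * (m : ℤ) := by push_cast at hk; omega
      set j : ℤ := 2 * (m : ℤ) + k - i with hj
      have hX : q (k + 1) (i + 1) j
          = q (famN r m - (k + 1)) ((r : ℤ) - (i + 1)) ((r : ℤ) - j) := by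
        by_cases h : i + 1 ≤ (r : ℤ)
        · have h' := ih (k + 1) (i + 1) hk1 (by omega) (by omega) h (by omega) (by omega)
          rw [show 2 * (m : ℤ) + (k + 1) - (i + 1) = j by omega] at h'
          exact h'
        · rw [hz _ _ _ (by intro hcon; omega), hz _ _ _ (by intro hcon; omega)]
      have hY : q (k + 1) i (j + 1)
          = q (famN r m - (k + 1)) ((r : ℤ) - i) ((r : ℤ) - (j + 1)) := by
        by_cases h : j + 1 ≤ (r : ℤ)
        · have h' := ih (k + 1) i hk1 (by omega) hi0 hir (by omega) (by omega)
          rw [show 2 * (m : ℤ) + (k + 1) - i = j + 1 by omega] at h'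
          exact h'
        · rw [hz _ _ _ (by intro hcon; omega), hz _ _ _ (by intro hcon; omega)]
      have E1 := hR1 (k + 1) i j (by omega) (by rw [hfam]; omega) hi0 hir (by omega) hjr
      rw [show k + 1 - 1 = k by ring] at E1
      have E2 := hR2 (famN r m - (k + 1)) ((r : ℤ) - i) ((r : ℤ) - j)
        (by rw [hfam]; omega) (by rw [hfam]; omega) (by omega) (by omega) (by omega) (by omega)
      rw [show famN r m - (k + 1) + 1 = famN r m - k by ring,
        show (r : ℤ) - i - 1 = (r : ℤ) - (i + 1) by ring,
        show (r : ℤ) - j - 1 = (r : ℤ) - (j + 1) by ring,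
        show famN r m - (famN r m - (k + 1)) = k + 1 by ring] at E2
      rw [hX, hY] at E1
      have hne : ((k : ℂ) + 1) ≠ 0 := by
        have : ((k + 1 : ℤ) : ℂ) ≠ 0 := Int.cast_ne_zero.mpr (by omega)
        push_cast at this; exact this
      have h3 : ((k : ℂ) + 1) * q k i j
          = ((k : ℂ) + 1) * q (famN r m - k) ((r : ℤ) - i) ((r : ℤ) - j) := by
        push_cast at E1 E2
        linear_combination E1 - E2
      exact mul_left_cancel₀ hne h3
  intro k i hk0 hkN hi0 hir hj0 hjr
  exact key ((r : ℤ) - 2 * (m : ℤ) - k).toNat k i (by omega) hk0 hi0 hir hj0 hjr
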